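/- In the scaled one-step NormalHedge setting, if the average potential satisfies Ψ = (1/N)·Σ_{i=1}^N Φ(R_i) < 2.32, then after one update the average potential Ψ' = (1/N)·Σ_{i=1}^N Φ(R'_i) satisfies Ψ' − Ψ < (2/3)·α. -/

import Mathlib

open Finset

/-- The NormalHedge potential function: `Φ(x) = exp(x²/8)` for `x > 0`, `1` for `x ≤ 0`. -/
noncomputable def Phi (x : ℝ) : ℝ := if 0 < x then Real.exp (x ^ 2 / 8) else 1

/-- Derivative of the potential: `Φ'(x) = (x/4)·exp(x²/8)` for `x > 0`, `0` for `x ≤ 0`. -/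
noncomputable def Phi' (x : ℝ) : ℝ := if 0 < x then (x / 4) * Real.exp (x ^ 2 / 8) else 0

lemma Phi_eq {x : ℝ} (hx : 0 ≤ x) : Phi x = Real.exp (x ^ 2 / 8) := by
  unfold Phi
  rcases lt_or_eq_of_le hx with h | h
  · simp [h]
  · simp [← h]

lemma Phi'_eq {x : ℝ} (hx : 0 ≤ x) : Phi' x = x / 4 * Real.exp (x ^ 2 / 8) := by
  unfold Phi'
  rcases lt_or_eq_of_le hx with h | h
  · simp [h]
  · simp [← h]

lemma one_le_Phi (x : ℝ) : 1 ≤ Phi x := by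
  unfold Phi
  split
  · exact Real.one_le_exp (by positivity)
  · exact le_refl _

lemma Phi'_nonneg (x : ℝ) : 0 ≤ Phi' x := by
  unfold Phi'
  split
  · positivity
  · exact le_refl _

lemma exp_le_inv_one_sub {t : ℝ} (ht : t < 1) : Real.exp t ≤ 1 / (1 - t) := by
  have h := Real.add_one_le_exp (-t)
  have h2 : 0 < Real.exp (-t) := Real.exp_pos _
  rw [Real.exp_neg] at h
  have h3 : 0 < Real.exp t := Real.exp_pos _
  rw [one_div, le_inv_comm₀ h3 (by linarith)]
  linarith

noncomputable def f2 (t : ℝ) : ℝ := t / 4 * Real.exp (t ^ 2 / 8)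

lemma hasDerivAt_f2 (t : ℝ) :
    HasDerivAt f2 ((1 / 4 + t ^ 2 / 16) * Real.exp (t ^ 2 / 8)) t := by
  have h1 : HasDerivAt (fun t : ℝ => t ^ 2 / 8) (t / 4) t := by
    have := (hasDerivAt_pow 2 t).div_const 8
    exact this.congr_deriv (by ring)
  have h2 : HasDerivAt (fun t : ℝ => Real.exp (t ^ 2 / 8)) (Real.exp (t ^ 2 / 8) * (t / 4)) t :=
    (Real.hasDerivAt_exp _).comp t h1
  have h3 : HasDerivAt (fun t : ℝ => t / 4) (1 / 4 : ℝ) t := (hasDerivAt_id t).div_const 4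
  have := h3.mul h2
  exact this.congr_deriv (by ring)

lemma f2_cont : Continuous f2 := by
  unfold f2; continuity

lemma Kmono {s t : ℝ} (hs : 0 ≤ s) (hst : s ≤ t) :
    (1 / 4 + s ^ 2 / 16) * Real.exp (s ^ 2 / 8) ≤ (1 / 4 + t ^ 2 / 16) * Real.exp (t ^ 2 / 8) := by
  have h : s ^ 2 ≤ t ^ 2 := by nlinarith
  have := Real.exp_le_exp.mpr (show s ^ 2 / 8 ≤ t ^ 2 / 8 by linarith)
  have e1 : (0:ℝ) < Real.exp (s ^ 2 / 8) := Real.exp_pos _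
  nlinarith [Real.exp_pos (t ^ 2 / 8)]

lemma slope_bound {a b : ℝ} (ha : 0 ≤ a) (hab : a ≤ b) :
    f2 b - f2 a ≤ (1 / 4 + b ^ 2 / 16) * Real.exp (b ^ 2 / 8) * (b - a) := by
  rcases eq_or_lt_of_le hab with rfl | h
  · simp
  · obtain ⟨c, hc, hceq⟩ := exists_hasDerivAt_eq_slope f2
      (fun t => (1 / 4 + t ^ 2 / 16) * Real.exp (t ^ 2 / 8)) h
      (f2_cont.continuousOn) (fun t _ => hasDerivAt_f2 t)
    have hc0 : 0 ≤ c := le_trans ha hc.1.le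
    have hK : (1 / 4 + c ^ 2 / 16) * Real.exp (c ^ 2 / 8)
        ≤ (1 / 4 + b ^ 2 / 16) * Real.exp (b ^ 2 / 8) := Kmono hc0 hc.2.le
    have hba : 0 < b - a := by linarith
    have : (f2 b - f2 a) / (b - a) ≤ (1 / 4 + b ^ 2 / 16) * Real.exp (b ^ 2 / 8) := by
      rw [← hceq]; exact hK
    calc f2 b - f2 a = (f2 b - f2 a) / (b - a) * (b - a) := by field_simp
      _ ≤ (1 / 4 + b ^ 2 / 16) * Real.exp (b ^ 2 / 8) * (b - a) := by
          exact mul_le_mul_of_nonneg_right this hba.le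

lemma hasDerivAt_f1 (t : ℝ) :
    HasDerivAt (fun t : ℝ => Real.exp (t ^ 2 / 8)) (f2 t) t := by
  have h1 : HasDerivAt (fun t : ℝ => t ^ 2 / 8) (t / 4) t := by
    have := (hasDerivAt_pow 2 t).div_const 8
    exact this.congr_deriv (by ring)
  have := (Real.hasDerivAt_exp _).comp t h1
  exact this.congr_deriv (by unfold f2; ring)

/-- Taylor with Lagrange-style bound, ascending case, on `[x,y] ⊆ [0,∞)`. -/
lemma taylor_up {x y : ℝ} (hx : 0 ≤ x) (hxy : x ≤ y) :
    Real.exp (y ^ 2 / 8) ≤ Real.exp (x ^ 2 / 8) + f2 x * (y - x)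
      + (1 / 4 + y ^ 2 / 16) * Real.exp (y ^ 2 / 8) / 2 * (y - x) ^ 2 := by
  set K := (1 / 4 + y ^ 2 / 16) * Real.exp (y ^ 2 / 8) with hK
  set gfun : ℝ → ℝ := fun t => f2 x * (t - x) + K / 2 * (t - x) ^ 2 - Real.exp (t ^ 2 / 8) with hg
  have hder : ∀ t : ℝ, HasDerivAt gfun (f2 x + K * (t - x) - f2 t) t := by
    intro t
    have h1 : HasDerivAt (fun t : ℝ => f2 x * (t - x)) (f2 x) t := by
      have := ((hasDerivAt_id t).sub_const x).const_mul (f2 x)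
      exact this.congr_deriv (by ring)
    have h2 : HasDerivAt (fun t : ℝ => K / 2 * (t - x) ^ 2) (K * (t - x)) t := by
      have hb : HasDerivAt (fun t : ℝ => (t - x) ^ 2) (2 * (t - x)) t := by
        have := (hasDerivAt_pow 2 (t - x)).comp t ((hasDerivAt_id t).sub_const x)
        exact this.congr_deriv (by ring)
      have := hb.const_mul (K / 2)
      exact this.congr_deriv (by ring)
    exact (h1.add h2).sub (hasDerivAt_f1 t)
  have hmono : MonotoneOn gfun (Set.Icc x y) := by
    apply monotoneOn_of_deriv_nonneg (convex_Icc x y)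
    · exact Continuous.continuousOn (by
        have : Continuous gfun := by
          apply Continuous.sub
          · exact (continuous_const.mul (continuous_id.sub continuous_const)).add
              (continuous_const.mul ((continuous_id.sub continuous_const).pow 2))
          · exact Real.continuous_exp.comp (by continuity)
        exact this)
    · intro t ht
      exact (hder t).differentiableAt.differentiableWithinAt
    · intro t ht
      rw [(hder t).deriv]
      rw [interior_Icc] at ht
      have ht0 : 0 ≤ t := le_trans hx ht.1.le
      have h1 : f2 t - f2 x ≤ (1 / 4 + t ^ 2 / 16) * Real.exp (t ^ 2 / 8) * (t - x) :=
        slope_bound hx ht.1.le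
      have h2 : (1 / 4 + t ^ 2 / 16) * Real.exp (t ^ 2 / 8) ≤ K := Kmono ht0 ht.2.le
      have htx : 0 ≤ t - x := by linarith [ht.1]
      nlinarith
  have := hmono (Set.left_mem_Icc.mpr hxy) (Set.right_mem_Icc.mpr hxy) hxy
  simp only [hg] at this
  simp at this
  nlinarith [this]

/-- Taylor descending case: expansion at `x`, evaluate at `y ≤ x`, `y ≥ 0`. -/
lemma taylor_down {x y : ℝ} (hy : 0 ≤ y) (hxy : y ≤ x) :
    Real.exp (y ^ 2 / 8) ≤ Real.exp (x ^ 2 / 8) + f2 x * (y - x)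
      + (1 / 4 + x ^ 2 / 16) * Real.exp (x ^ 2 / 8) / 2 * (y - x) ^ 2 := by
  set K := (1 / 4 + x ^ 2 / 16) * Real.exp (x ^ 2 / 8) with hK
  set gfun : ℝ → ℝ := fun t => f2 x * (t - x) + K / 2 * (t - x) ^ 2 - Real.exp (t ^ 2 / 8) with hg
  have hder : ∀ t : ℝ, HasDerivAt gfun (f2 x + K * (t - x) - f2 t) t := by
    intro t
    have h1 : HasDerivAt (fun t : ℝ => f2 x * (t - x)) (f2 x) t := by
      have := ((hasDerivAt_id t).sub_const x).const_mul (f2 x)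
      exact this.congr_deriv (by ring)
    have h2 : HasDerivAt (fun t : ℝ => K / 2 * (t - x) ^ 2) (K * (t - x)) t := by
      have hb : HasDerivAt (fun t : ℝ => (t - x) ^ 2) (2 * (t - x)) t := by
        have := (hasDerivAt_pow 2 (t - x)).comp t ((hasDerivAt_id t).sub_const x)
        exact this.congr_deriv (by ring)
      have := hb.const_mul (K / 2)
      exact this.congr_deriv (by ring)
    exact (h1.add h2).sub (hasDerivAt_f1 t)
  have hmono : AntitoneOn gfun (Set.Icc y x) := by
    apply antitoneOn_of_deriv_nonpos (convex_Icc y x)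
    · exact Continuous.continuousOn (by
        apply Continuous.sub
        · exact (continuous_const.mul (continuous_id.sub continuous_const)).add
            (continuous_const.mul ((continuous_id.sub continuous_const).pow 2))
        · exact Real.continuous_exp.comp (by continuity))
    · intro t ht
      exact (hder t).differentiableAt.differentiableWithinAt
    · intro t ht
      rw [(hder t).deriv]
      rw [interior_Icc] at ht
      have ht0 : 0 ≤ t := le_trans hy ht.1.le
      have h1 : f2 x - f2 t ≤ K * (x - t) := by
        have := slope_bound ht0 ht.2.le
        rw [hK]; linarith
      nlinarith
  have := hmono (Set.left_mem_Icc.mpr hxy) (Set.right_mem_Icc.mpr hxy) hxy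
  simp only [hg] at this
  simp at this
  nlinarith [this]

lemma phi_taylor {x y : ℝ} (hx : 0 < x) :
    Phi y ≤ Phi x + Phi' x * (y - x)
      + (1 / 4 + (max x y) ^ 2 / 16) * Real.exp ((max x y) ^ 2 / 8) / 2 * (y - x) ^ 2 := by
  rw [Phi_eq hx.le, Phi'_eq hx.le]
  rcases le_or_gt x y with h | h
  · rw [max_eq_right h, Phi_eq (le_trans hx.le h)]
    exact taylor_up hx.le h
  · rw [max_eq_left h.le]
    rcases le_or_gt 0 y with hy | hy
    · rw [Phi_eq hy]
      exact taylor_down hy h.le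
    · -- y < 0 : Phi y = 1 = exp(0), use taylor_down at 0 and monotonicity of RHS
      have h0 : Phi y = 1 := by unfold Phi; rw [if_neg (not_lt.mpr hy.le)]
      have hd := taylor_down (le_refl (0:ℝ)) hx.le
      simp only [ne_eq, OfNat.ofNat_ne_zero, not_false_eq_true, zero_pow, zero_div,
        Real.exp_zero] at hd
      rw [h0]
      set E := Real.exp (x ^ 2 / 8) with hE
      have hEpos : 0 < E := Real.exp_pos _
      have hK : (1/4) * E ≤ (1 / 4 + x ^ 2 / 16) * E := by nlinarith
      -- RHS(y) - RHS(0) = y * (x/4*E + K/2*(y - 2x)) ≥ 0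
      have hf2 : f2 x = x / 4 * E := rfl
      rw [hf2] at hd
      set K := (1 / 4 + x ^ 2 / 16) * E with hKdef
      have hKpos : 0 < K := by positivity
      have hbr : x / 4 * E + K * (y - 2 * x) / 2 ≤ 0 := by nlinarith
      have key : 0 ≤ y * (x / 4 * E + K * (y - 2 * x) / 2) :=
        mul_nonneg_of_nonpos_of_nonpos hy.le hbr
      nlinarith [key, hd]

set_option maxHeartbeats 2000000 in
lemma step_bound {α R d : ℝ} (hα0 : 0 < α) (hα : α ≤ 1 / 552)
    (hd : |d| ≤ 2 * Real.sqrt α) (hR2 : 0 < R → α * R ^ 2 ≤ 1 / 100) :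
    Phi ((1 - α) * R + d) ≤ Phi R + Phi' R * d + 13 / 20 * α := by
  set s := Real.sqrt α with hs
  have hs0 : 0 ≤ s := Real.sqrt_nonneg _
  have hs2 : s ^ 2 = α := Real.sq_sqrt hα0.le
  have hdabs : -(2 * s) ≤ d ∧ d ≤ 2 * s := abs_le.mp hd
  rcases le_or_gt R 0 with hR | hR
  · -- nonpositive regret: direct bound
    have hP' : Phi' R = 0 := by unfold Phi'; rw [if_neg (not_lt.mpr hR)]
    have hPR : Phi R = 1 := by unfold Phi; rw [if_neg (not_lt.mpr hR)]
    rw [hP', hPR]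
    have hR'le : (1 - α) * R + d ≤ 2 * s := by nlinarith
    have hPle : Phi ((1 - α) * R + d) ≤ Real.exp (α / 2) := by
      unfold Phi
      split
      · apply Real.exp_le_exp.mpr
        have h1 : ((1 - α) * R + d) ^ 2 ≤ (2 * s) ^ 2 := by
          apply sq_le_sq'
          · nlinarith
          · exact hR'le
        nlinarith
      · exact Real.one_le_exp (by positivity)
    have he : Real.exp (α / 2) ≤ 1 / (1 - α / 2) := exp_le_inv_one_sub (by linarith)
    have h2 : 1 / (1 - α / 2) ≤ 1 + 13 / 20 * α := by
      rw [div_le_iff₀ (by linarith)]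
      nlinarith
    linarith
  · -- positive regret: Taylor bound
    have hsR : s * R ≤ 1 / 10 := by
      have h1 : (s * R) ^ 2 ≤ (1 / 10 : ℝ) ^ 2 := by
        have := hR2 hR
        nlinarith
      have : 0 ≤ s * R := by positivity
      nlinarith
    obtain ⟨y, hy⟩ : ∃ y, y = (1 - α) * R + d := ⟨_, rfl⟩
    rw [← hy]
    obtain ⟨m, hm⟩ : ∃ m, m = max R y := ⟨_, rfl⟩
    have hΔ1 : y - R = d - α * R := by rw [hy]; ring
    have hΔabs : |y - R| ≤ 21 / 10 * s := by
      rw [hΔ1, abs_le]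
      have hαR : α * R ≤ s / 10 := by
        calc α * R = s * (s * R) := by rw [← hs2]; ring
          _ ≤ s * (1 / 10) := by apply mul_le_mul_of_nonneg_left hsR hs0
          _ = s / 10 := by ring
      have hαR0 : 0 ≤ α * R := by positivity
      constructor <;> nlinarith
    have hΔsq : (y - R) ^ 2 ≤ 441 / 100 * α := by
      have h1 := mul_self_le_mul_self (abs_nonneg (y - R)) hΔabs
      rw [abs_mul_abs_self] at h1
      nlinarith
    have hm0 : 0 < m := by rw [hm]; exact lt_max_of_lt_left hR
    have hmle : m ≤ R + 21 / 10 * s := by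
      rw [hm]; apply max_le
      · nlinarith
      · nlinarith [abs_le.mp hΔabs]
    have hm2 : m ^ 2 ≤ R ^ 2 + 43 / 100 := by
      have h1 : m ^ 2 ≤ (R + 21 / 10 * s) ^ 2 := by nlinarith
      have hss : s ^ 2 ≤ 1 / 552 := by rw [hs2]; exact hα
      nlinarith [hsR, hs0]
    -- exp(m²/8) ≤ (800/757) * exp(R²/8)
    obtain ⟨E, hE⟩ : ∃ E, E = Real.exp (R ^ 2 / 8) := ⟨_, rfl⟩
    have hEpos : 0 < E := hE ▸ Real.exp_pos _
    have hexpm : Real.exp (m ^ 2 / 8) ≤ 800 / 757 * E := by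
      have h1 : Real.exp (m ^ 2 / 8) ≤ Real.exp (R ^ 2 / 8 + 43 / 800) := by
        apply Real.exp_le_exp.mpr; linarith
      rw [Real.exp_add, ← hE] at h1
      have h2 : Real.exp (43 / 800 : ℝ) ≤ 800 / 757 := by
        have := exp_le_inv_one_sub (show (43 : ℝ) / 800 < 1 by norm_num)
        calc Real.exp (43 / 800 : ℝ) ≤ 1 / (1 - 43 / 800) := this
          _ = 800 / 757 := by norm_num
      calc Real.exp (m ^ 2 / 8) ≤ E * Real.exp (43 / 800 : ℝ) := h1
        _ ≤ E * (800 / 757) := by exact mul_le_mul_of_nonneg_left h2 hEpos.le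
        _ = 800 / 757 * E := by ring
    have hPR : Phi R = E := by unfold Phi; rw [if_pos hR, hE]
    have hP'R : Phi' R = R / 4 * E := by unfold Phi'; rw [if_pos hR, hE]
    have ht := phi_taylor (x := R) (y := y) hR
    rw [← hm, hPR, hP'R] at ht
    rw [hPR, hP'R]
    -- bound the second-order term
    have hKb : (1 / 4 + m ^ 2 / 16) * Real.exp (m ^ 2 / 8) / 2 * (y - R) ^ 2
        ≤ (1 / 4 + (R ^ 2 + 43 / 100) / 16) * (800 / 757 * E) / 2 * (441 / 100 * α) := by
      gcongr <;> first | linarith | exact hexpm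
    -- combine: Phi y ≤ E + R/4*E*d - α*R²/4*E + secondbound
    have hmain : Phi y ≤ E + R / 4 * E * d +
        α * ((1 / 4 + (R ^ 2 + 43 / 100) / 16) * (800 / 757) / 2 * (441 / 100) - R ^ 2 / 4) * E := by
      have h1 : R / 4 * E * (y - R) = R / 4 * E * d - α * R ^ 2 / 4 * E := by
        rw [hΔ1]; ring
      rw [h1] at ht
      have h2 : E + (R / 4 * E * d - α * R ^ 2 / 4 * E)
            + (1 / 4 + (R ^ 2 + 43 / 100) / 16) * (800 / 757 * E) / 2 * (441 / 100 * α)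
          = E + R / 4 * E * d +
            α * ((1 / 4 + (R ^ 2 + 43 / 100) / 16) * (800 / 757) / 2 * (441 / 100) - R ^ 2 / 4) * E := by
        ring
      linarith
    -- final numeric step: E * (c0 - c2 * R²) ≤ 13/20  with u = R²
    have hfin : ((1 / 4 + (R ^ 2 + 43 / 100) / 16) * (800 / 757) / 2 * (441 / 100) - R ^ 2 / 4) * E
        ≤ 13 / 20 := by
      obtain ⟨u, hu⟩ : ∃ u, u = R ^ 2 := ⟨_, rfl⟩
      rw [← hu]
      have hu0 : 0 ≤ u := hu ▸ sq_nonneg R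
      have hbr : (1 / 4 + (u + 43 / 100) / 16) * (800 / 757) / 2 * (441 / 100) - u / 4
          = 781452 / 1211200 - 79 / 757 * u := by ring
      rw [hbr]
      have hexp := Real.add_one_le_exp (-(u / 8))
      have hEinv : Real.exp (-(u / 8)) * E = 1 := by
        rw [hE, hu, ← Real.exp_add]; norm_num
      rcases le_or_gt (781452 / 1211200 - 79 / 757 * u) 0 with hneg | hpos
      · nlinarith
      · have h3 : 781452 / 1211200 - 79 / 757 * u ≤ 781452 / 1211200 * (1 - u / 8) := by
          nlinarith
        calc (781452 / 1211200 - 79 / 757 * u) * E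
            ≤ 781452 / 1211200 * (1 - u / 8) * E := by nlinarith
          _ ≤ 781452 / 1211200 * Real.exp (-(u / 8)) * E := by nlinarith [Real.exp_pos (-(u/8))]
          _ = 781452 / 1211200 := by rw [mul_assoc, hEinv]; ring
          _ ≤ 13 / 20 := by norm_num
    have : α * ((1 / 4 + (R ^ 2 + 43 / 100) / 16) * (800 / 757) / 2 * (441 / 100) - R ^ 2 / 4) * E
        ≤ 13 / 20 * α := by
      have := mul_le_mul_of_nonneg_left hfin hα0.le
      calc α * ((1 / 4 + (R ^ 2 + 43 / 100) / 16) * (800 / 757) / 2 * (441 / 100) - R ^ 2 / 4) * E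
          = α * (((1 / 4 + (R ^ 2 + 43 / 100) / 16) * (800 / 757) / 2 * (441 / 100) - R ^ 2 / 4) * E) := by ring
        _ ≤ α * (13 / 20) := this
        _ = 13 / 20 * α := by ring
    linarith

/-- if the average potential is below 2.32, then after one scaled
NormalHedge update the average potential increases by less than `(2/3)·α`. -/
theorem normalHedge_average_potential_step

    (N : ℕ) (hN : 1 ≤ N)
    (α : ℝ) (hα0 : 0 < α) (hα : α < 1 / (800 * Real.log (2.32 * N)))
    (R g : Fin N → ℝ) (hg : ∀ i, |g i| ≤ Real.sqrt α)
    (p : Fin N → ℝ)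
    (hp : ∀ i, p i =
      if 0 < ∑ k, Phi' (R k) then Phi' (R i) / ∑ k, Phi' (R k) else 1 / N)
    (gA : ℝ) (hgA : gA = ∑ i, p i * g i)
    (R' : Fin N → ℝ) (hR' : ∀ i, R' i = (1 - α) * R i + g i - gA)
    (hΨ : (1 / (N : ℝ)) * ∑ i, Phi (R i) < 2.32) :
    (1 / (N : ℝ)) * ∑ i, Phi (R' i) - (1 / (N : ℝ)) * ∑ i, Phi (R i) < (2 / 3) * α := by
  have hNR : (1 : ℝ) ≤ (N : ℝ) := by exact_mod_cast hN
  have hNpos : (0 : ℝ) < (N : ℝ) := by linarith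
  set L := Real.log (2.32 * N) with hL
  have hL2 : Real.log 2 ≤ L := by
    apply Real.log_le_log (by norm_num)
    nlinarith
  have hlog2 : (0.6931 : ℝ) < Real.log 2 := by
    have := Real.log_two_gt_d9; linarith
  have hLpos : 0 < L := by linarith
  have hα552 : α ≤ 1 / 552 := by
    have h800 : (552 : ℝ) ≤ 800 * L := by nlinarith
    have : 1 / (800 * L) ≤ 1 / 552 := by
      apply one_div_le_one_div_of_le (by norm_num) h800
    linarith
  -- sum of potentials below 2.32 N
  have hsum : ∑ i, Phi (R i) < 2.32 * N := by
    have := (mul_lt_mul_iff_right₀ hNpos).mpr hΨ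
    rw [← mul_assoc] at this
    field_simp at this
    calc ∑ i, Phi (R i) = (N : ℝ) * ((1 / N) * ∑ i, Phi (R i)) := by field_simp
      _ < (N : ℝ) * 2.32 := by exact (mul_lt_mul_iff_right₀ hNpos).mpr hΨ
      _ = 2.32 * N := by ring
  -- individual regret bound
  have hR2 : ∀ i, 0 < R i → α * (R i) ^ 2 ≤ 1 / 100 := by
    intro i hRi
    have hPhile : Phi (R i) ≤ ∑ k, Phi (R k) := by
      apply Finset.single_le_sum (f := fun k => Phi (R k))
      · intro k _
        linarith [one_le_Phi (R k)]
      · exact Finset.mem_univ i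
    have hPi : Phi (R i) = Real.exp ((R i) ^ 2 / 8) := by
      unfold Phi; rw [if_pos hRi]
    have hexp : Real.exp ((R i) ^ 2 / 8) < Real.exp L := by
      rw [hL, Real.exp_log (by nlinarith)]
      calc Real.exp ((R i) ^ 2 / 8) = Phi (R i) := hPi.symm
        _ ≤ ∑ k, Phi (R k) := hPhile
        _ < 2.32 * N := hsum
    have h8L : (R i) ^ 2 < 8 * L := by
      have := Real.exp_lt_exp.mp hexp
      linarith
    have hαL : α * (800 * L) < 1 := by
      have h800L : 0 < 800 * L := by linarith
      calc α * (800 * L) < (1 / (800 * L)) * (800 * L) := by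
            exact (mul_lt_mul_iff_left₀ h800L).mpr hα
        _ = 1 := by field_simp
    nlinarith [sq_nonneg (R i)]
  -- weights: nonneg and sum to one
  have hS : 0 ≤ ∑ k, Phi' (R k) := Finset.sum_nonneg fun k _ => Phi'_nonneg (R k)
  have hp_nonneg : ∀ i, 0 ≤ p i := by
    intro i
    rw [hp i]
    split
    · exact div_nonneg (Phi'_nonneg _) hS
    · positivity
  have hp_sum : ∑ i, p i = 1 := by
    rcases lt_or_ge 0 (∑ k, Phi' (R k)) with hpos | hle
    · have : ∀ i : Fin N, p i = Phi' (R i) / ∑ k, Phi' (R k) := by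
        intro i; rw [hp i, if_pos hpos]
      rw [Finset.sum_congr rfl (fun i _ => this i), ← Finset.sum_div]
      field_simp
    · have hS0 : ∑ k, Phi' (R k) = 0 := le_antisymm hle hS
      have : ∀ i : Fin N, p i = 1 / N := by
        intro i; rw [hp i, if_neg (by rw [hS0]; exact lt_irrefl 0)]
      rw [Finset.sum_congr rfl (fun i _ => this i), Finset.sum_const, Finset.card_univ,
        Fintype.card_fin, nsmul_eq_mul]
      field_simp
  have hgA_abs : |gA| ≤ Real.sqrt α := by
    rw [hgA]
    calc |∑ i, p i * g i| ≤ ∑ i, |p i * g i| := Finset.abs_sum_le_sum_abs _ _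
      _ ≤ ∑ i, p i * Real.sqrt α := by
          apply Finset.sum_le_sum
          intro i _
          rw [abs_mul, abs_of_nonneg (hp_nonneg i)]
          exact mul_le_mul_of_nonneg_left (hg i) (hp_nonneg i)
      _ = (∑ i, p i) * Real.sqrt α := by rw [← Finset.sum_mul]
      _ = Real.sqrt α := by rw [hp_sum, one_mul]
  -- cancellation of the first-order term
  have hcancel : ∑ i, Phi' (R i) * (g i - gA) = 0 := by
    have hsplit : ∑ i, Phi' (R i) * (g i - gA)
        = (∑ i, Phi' (R i) * g i) - gA * ∑ i, Phi' (R i) := by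
      rw [Finset.mul_sum, ← Finset.sum_sub_distrib]
      apply Finset.sum_congr rfl
      intro i _; ring
    rw [hsplit]
    rcases lt_or_ge 0 (∑ k, Phi' (R k)) with hpos | hle
    · have hgA2 : gA * ∑ k, Phi' (R k) = ∑ i, Phi' (R i) * g i := by
        rw [hgA, Finset.sum_mul]
        apply Finset.sum_congr rfl
        intro i _
        rw [hp i, if_pos hpos]
        field_simp
      rw [hgA2]; ring
    · have hS0 : ∑ k, Phi' (R k) = 0 := le_antisymm hle hS
      have hz : ∀ i : Fin N, i ∈ Finset.univ → Phi' (R i) = 0 := by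
        intro i _
        have := (Finset.sum_eq_zero_iff_of_nonneg
          (fun k _ => Phi'_nonneg (R k))).mp hS0
        exact this i (Finset.mem_univ i)
      rw [hS0, Finset.sum_eq_zero (fun i hi => by rw [hz i hi, zero_mul])]
      ring
  -- per-term bound and summation
  have hterm : ∀ i : Fin N, Phi (R' i) ≤ Phi (R i) + Phi' (R i) * (g i - gA) + 13 / 20 * α := by
    intro i
    have hd : |g i - gA| ≤ 2 * Real.sqrt α := by
      calc |g i - gA| ≤ |g i| + |gA| := abs_sub _ _
        _ ≤ Real.sqrt α + Real.sqrt α := add_le_add (hg i) hgA_abs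
        _ = 2 * Real.sqrt α := by ring
    have hstep := step_bound hα0 hα552 hd (hR2 i)
    have hRi' : R' i = (1 - α) * R i + (g i - gA) := by rw [hR' i]; ring
    rw [hRi']
    exact hstep
  have hsum' : ∑ i, Phi (R' i) ≤ ∑ i, Phi (R i) + 13 / 20 * α * N := by
    calc ∑ i, Phi (R' i)
        ≤ ∑ i, (Phi (R i) + Phi' (R i) * (g i - gA) + 13 / 20 * α) :=
          Finset.sum_le_sum (fun i _ => hterm i)
      _ = ∑ i, Phi (R i) + ∑ i, Phi' (R i) * (g i - gA) + ∑ i : Fin N, (13 / 20 * α) := by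
          rw [Finset.sum_add_distrib, Finset.sum_add_distrib]
      _ = ∑ i, Phi (R i) + 13 / 20 * α * N := by
          rw [hcancel, Finset.sum_const, Finset.card_univ, Fintype.card_fin, nsmul_eq_mul]
          ring
  -- conclude
  have hfinal : (1 / (N : ℝ)) * ∑ i, Phi (R' i) - (1 / (N : ℝ)) * ∑ i, Phi (R i)
      ≤ 13 / 20 * α := by
    rw [← mul_sub]
    have h1 : ∑ i, Phi (R' i) - ∑ i, Phi (R i) ≤ 13 / 20 * α * N := by linarith
    calc (1 / (N : ℝ)) * (∑ i, Phi (R' i) - ∑ i, Phi (R i))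
        ≤ (1 / (N : ℝ)) * (13 / 20 * α * N) := by
          apply mul_le_mul_of_nonneg_left h1 (by positivity)
      _ = 13 / 20 * α := by field_simp
  have : 13 / 20 * α < 2 / 3 * α := by nlinarith
  linarith
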